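/- Let C0, C1 ⊆ F2^{nA} and C0', C1' ⊆ F2^{nB} be binary linear codes with X-check space 𝒳 = (C0^⊥ ⊗ C0') + (C1^⊥ ⊗ C1') and Z-check space 𝒵 = (C0 ⊗ C1'^⊥) + (C1 ⊗ C0'^⊥). Then the base CSS code dimension k = nA·nB - dim(𝒳) - dim(𝒵) equals dim(C0 ∩ C1)·dim(C0' ∩ C1') + dim(C0^⊥ ∩ C1^⊥)·dim(C0'^⊥ ∩ C1'^⊥). -/

import Mathlib

open Matrix

abbrev F2 : Type := ZMod 2

/-- The dual code of a linear code `C ⊆ F2^n` w.r.t. the standard bilinear form. -/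
def dualCode {n : ℕ} (C : Submodule F2 (Fin n → F2)) : Submodule F2 (Fin n → F2) where
  carrier := {x | ∀ c ∈ C, x ⬝ᵥ c = 0}
  add_mem' := by
    intro a b ha hb c hc
    rw [Set.mem_setOf_eq] at *
    rw [add_dotProduct, ha c hc, hb c hc, add_zero]
  zero_mem' := by
    intro c hc
    simp
  smul_mem' := by
    intro r x hx c hc
    rw [Set.mem_setOf_eq] at *
    rw [smul_dotProduct, hx c hc, smul_zero]

/-- `U ⊗ V`, the subspace of `F2^{nA} ⊗ F2^{nB}` (viewed as `nA × nB` matrices)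
spanned by pure tensors `u ⊗ v` with `u ∈ U, v ∈ V`. -/
def tensorSpan {nA nB : ℕ} (U : Submodule F2 (Fin nA → F2)) (V : Submodule F2 (Fin nB → F2)) :
    Submodule F2 (Matrix (Fin nA) (Fin nB) F2) :=
  Submodule.span F2 {M | ∃ u ∈ U, ∃ v ∈ V, M = Matrix.of fun i j => u i * v j}

/-! ### Auxiliary material -/

open TensorProduct LinearMap

section TensorGeneral

variable {K : Type*} [Field K] {M N M' M'' : Type*} [AddCommGroup M] [Module K M]
  [AddCommGroup N] [Module K N] [AddCommGroup M'] [Module K M'] [AddCommGroup M''] [Module K M'']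

lemma aux_ker_rTensor_eq (f : M →ₗ[K] M') (X : Submodule K M) (hX : ker f = X) :
    ker (rTensor N f) = range (rTensor N X.subtype) := by
  subst hX
  exact (LinearMap.exact_iff.mp (Module.Flat.rTensor_exact N f.exact_subtype_ker_map))

lemma aux_ker_lTensor_eq (f : M →ₗ[K] M') (X : Submodule K M) (hX : ker f = X) :
    ker (lTensor N f) = range (lTensor N X.subtype) := by
  subst hX
  exact (LinearMap.exact_iff.mp (Module.Flat.lTensor_exact N f.exact_subtype_ker_map))

lemma aux_ker_rTensor_prod (f : M →ₗ[K] M') (g : M →ₗ[K] M'') :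
    ker (rTensor N (f.prod g)) = ker (rTensor N f) ⊓ ker (rTensor N g) := by
  have hcomp : (TensorProduct.prodLeft K K M' M'' N).toLinearMap ∘ₗ rTensor N (f.prod g)
      = (rTensor N f).prod (rTensor N g) := by
    apply TensorProduct.ext'; intro m n; simp
  have h1 : ker ((TensorProduct.prodLeft K K M' M'' N).toLinearMap ∘ₗ rTensor N (f.prod g))
      = ker (rTensor N (f.prod g)) := LinearMap.ker_comp_of_ker_eq_bot _ (LinearEquiv.ker _)
  rw [← h1, hcomp, LinearMap.ker_prod]

lemma aux_ker_lTensor_prod (f : M →ₗ[K] M') (g : M →ₗ[K] M'') :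
    ker (lTensor N (f.prod g)) = ker (lTensor N f) ⊓ ker (lTensor N g) := by
  have hcomp : (TensorProduct.prodRight K K N M' M'').toLinearMap ∘ₗ lTensor N (f.prod g)
      = (lTensor N f).prod (lTensor N g) := by
    apply TensorProduct.ext'; intro m n; simp
  have h1 : ker ((TensorProduct.prodRight K K N M' M'').toLinearMap ∘ₗ lTensor N (f.prod g))
      = ker (lTensor N (f.prod g)) := LinearMap.ker_comp_of_ker_eq_bot _ (LinearEquiv.ker _)
  rw [← h1, hcomp, LinearMap.ker_prod]

lemma aux_range_rTensor_inf (X Y : Submodule K M) :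
    range (rTensor N X.subtype) ⊓ range (rTensor N Y.subtype)
      = range (rTensor N (X ⊓ Y).subtype) := by
  rw [← aux_ker_rTensor_eq (N := N) X.mkQ X (Submodule.ker_mkQ X),
      ← aux_ker_rTensor_eq (N := N) Y.mkQ Y (Submodule.ker_mkQ Y),
      ← aux_ker_rTensor_prod,
      aux_ker_rTensor_eq (N := N) (X.mkQ.prod Y.mkQ) (X ⊓ Y)
        (by rw [LinearMap.ker_prod, Submodule.ker_mkQ, Submodule.ker_mkQ])]

lemma aux_range_lTensor_inf (X Y : Submodule K M) :
    range (lTensor N X.subtype) ⊓ range (lTensor N Y.subtype)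
      = range (lTensor N (X ⊓ Y).subtype) := by
  rw [← aux_ker_lTensor_eq (N := N) X.mkQ X (Submodule.ker_mkQ X),
      ← aux_ker_lTensor_eq (N := N) Y.mkQ Y (Submodule.ker_mkQ Y),
      ← aux_ker_lTensor_prod,
      aux_ker_lTensor_eq (N := N) (X.mkQ.prod Y.mkQ) (X ⊓ Y)
        (by rw [LinearMap.ker_prod, Submodule.ker_mkQ, Submodule.ker_mkQ])]

lemma aux_range_mapIncl_eq_inf (U : Submodule K M) (V : Submodule K N) :
    range (mapIncl U V) = range (rTensor N U.subtype) ⊓ range (lTensor M V.subtype) := by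
  apply le_antisymm
  · refine le_inf ?_ ?_
    · rw [show mapIncl U V = (rTensor N U.subtype) ∘ₗ (lTensor (↥U) V.subtype) by
        apply TensorProduct.ext'; intro u v; rfl]
      exact LinearMap.range_comp_le_range _ _
    · rw [show mapIncl U V = (lTensor M V.subtype) ∘ₗ (rTensor (↥V) U.subtype) by
        apply TensorProduct.ext'; intro u v; rfl]
      exact LinearMap.range_comp_le_range _ _
  · intro x hx
    rw [Submodule.mem_inf] at hx
    obtain ⟨hx1, hx2⟩ := hx
    obtain ⟨y, rfl⟩ := hx1
    rw [← aux_ker_lTensor_eq (N := M) V.mkQ V (Submodule.ker_mkQ V), LinearMap.mem_ker] at hx2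
    have hcomm : (lTensor M V.mkQ) ∘ₗ (rTensor N U.subtype)
        = (rTensor (N ⧸ V) U.subtype) ∘ₗ (lTensor (↥U) V.mkQ) := by
      apply TensorProduct.ext'; intro u n; rfl
    have h2 : (rTensor (N ⧸ V) U.subtype) ((lTensor (↥U) V.mkQ) y) = 0 := by
      have h := congrArg (fun f => f y) hcomm
      simp only [LinearMap.comp_apply] at h
      rw [← h]; exact hx2
    have hy0 : (lTensor (↥U) V.mkQ) y = 0 :=
      Module.Flat.rTensor_preserves_injective_linearMap U.subtype U.injective_subtype
        (by simpa using h2)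
    rw [← LinearMap.mem_ker, aux_ker_lTensor_eq (N := ↥U) V.mkQ V (Submodule.ker_mkQ V)] at hy0
    obtain ⟨z, rfl⟩ := hy0
    refine ⟨z, ?_⟩
    have hsplit : mapIncl U V = (rTensor N U.subtype) ∘ₗ (lTensor (↥U) V.subtype) := by
      apply TensorProduct.ext'; intro u v; rfl
    rw [hsplit]; rfl

lemma aux_range_mapIncl_inf (U0 U1 : Submodule K M) (V0 V1 : Submodule K N) :
    range (mapIncl U0 V0) ⊓ range (mapIncl U1 V1)
      = range (mapIncl (U0 ⊓ U1) (V0 ⊓ V1)) := by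
  rw [aux_range_mapIncl_eq_inf, aux_range_mapIncl_eq_inf, aux_range_mapIncl_eq_inf,
    inf_inf_inf_comm, aux_range_rTensor_inf, aux_range_lTensor_inf]

lemma aux_mapIncl_injective (U : Submodule K M) (V : Submodule K N) :
    Function.Injective (mapIncl U V) := by
  rw [show mapIncl U V = (rTensor N U.subtype) ∘ₗ (lTensor (↥U) V.subtype) by
    apply TensorProduct.ext'; intro u v; rfl]
  exact (Module.Flat.rTensor_preserves_injective_linearMap U.subtype U.injective_subtype).comp
    (Module.Flat.lTensor_preserves_injective_linearMap V.subtype V.injective_subtype)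

end TensorGeneral

/-! ### The outer-product realization of the tensor product as matrices -/

noncomputable def outerBilin (nA nB : ℕ) :
    (Fin nA → F2) →ₗ[F2] (Fin nB → F2) →ₗ[F2] Matrix (Fin nA) (Fin nB) F2 :=
  LinearMap.mk₂ F2 (fun u v => Matrix.vecMulVec u v)
    (fun u u' v => by ext i j; simp [Matrix.vecMulVec_apply, add_mul])
    (fun c u v => by ext i j; simp [Matrix.vecMulVec_apply, mul_assoc])
    (fun u v v' => by ext i j; simp [Matrix.vecMulVec_apply, mul_add])
    (fun c u v => by ext i j; simp [Matrix.vecMulVec_apply]; ring)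

noncomputable def outerMap (nA nB : ℕ) :
    ((Fin nA → F2) ⊗[F2] (Fin nB → F2)) →ₗ[F2] Matrix (Fin nA) (Fin nB) F2 :=
  TensorProduct.lift (outerBilin nA nB)

noncomputable def rowsMap (nA nB : ℕ) :
    Matrix (Fin nA) (Fin nB) F2 →ₗ[F2] ((Fin nA → F2) ⊗[F2] (Fin nB → F2)) where
  toFun A := ∑ i, (Pi.single i 1 : Fin nA → F2) ⊗ₜ[F2] (A i)
  map_add' A B := by
    rw [← Finset.sum_add_distrib]
    refine Finset.sum_congr rfl fun i _ => ?_
    rw [← tmul_add]; rfl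
  map_smul' c A := by
    simp only [RingHom.id_apply]
    rw [Finset.smul_sum]
    refine Finset.sum_congr rfl fun i _ => ?_
    rw [← tmul_smul]; rfl

lemma rowsMap_outerMap (nA nB : ℕ) (x : (Fin nA → F2) ⊗[F2] (Fin nB → F2)) :
    rowsMap nA nB (outerMap nA nB x) = x := by
  have : (rowsMap nA nB) ∘ₗ (outerMap nA nB) = LinearMap.id := by
    apply TensorProduct.ext'
    intro u v
    simp only [LinearMap.comp_apply, outerMap, TensorProduct.lift.tmul, outerBilin,
      LinearMap.mk₂_apply, LinearMap.id_apply]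
    show ∑ i, (Pi.single i 1 : Fin nA → F2) ⊗ₜ[F2] (Matrix.vecMulVec u v i) = u ⊗ₜ[F2] v
    have hrow : ∀ i, Matrix.vecMulVec u v i = u i • v := by
      intro i; funext j; simp [Matrix.vecMulVec_apply]
    calc ∑ i, (Pi.single i 1 : Fin nA → F2) ⊗ₜ[F2] (Matrix.vecMulVec u v i)
        = ∑ i, (Pi.single i (u i) : Fin nA → F2) ⊗ₜ[F2] v := by
          refine Finset.sum_congr rfl fun i _ => ?_
          rw [hrow i, tmul_smul, smul_tmul', ← Pi.single_smul, smul_eq_mul, mul_one]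
      _ = (∑ i, (Pi.single i (u i) : Fin nA → F2)) ⊗ₜ[F2] v := by
          rw [sum_tmul]
      _ = u ⊗ₜ[F2] v := by rw [Finset.univ_sum_single]
  exact congrArg (fun f => f x) this

lemma outerMap_injective (nA nB : ℕ) : Function.Injective (outerMap nA nB) :=
  Function.LeftInverse.injective (rowsMap_outerMap nA nB)

lemma tensorSpan_eq {nA nB : ℕ} (U : Submodule F2 (Fin nA → F2))
    (V : Submodule F2 (Fin nB → F2)) :
    tensorSpan U V = Submodule.map (outerMap nA nB) (range (mapIncl U V)) := by
  rw [TensorProduct.range_mapIncl, Submodule.map₂_eq_span_image2, Submodule.map_span, tensorSpan]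
  congr 1
  ext A
  constructor
  · rintro ⟨u, hu, v, hv, rfl⟩
    exact ⟨u ⊗ₜ[F2] v, ⟨u, hu, v, hv, rfl⟩, rfl⟩
  · rintro ⟨t, ⟨u, hu, v, hv, rfl⟩, rfl⟩
    exact ⟨u, hu, v, hv, rfl⟩

set_option synthInstance.maxHeartbeats 1000000 in
lemma finrank_tensorSpan {nA nB : ℕ} (U : Submodule F2 (Fin nA → F2))
    (V : Submodule F2 (Fin nB → F2)) :
    Module.finrank F2 (tensorSpan U V) = Module.finrank F2 U * Module.finrank F2 V := by
  rw [tensorSpan_eq]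
  have e : (↥(range (mapIncl U V))) ≃ₗ[F2]
      ↥(Submodule.map (outerMap nA nB) (range (mapIncl U V))) :=
    Submodule.equivMapOfInjective (outerMap nA nB) (outerMap_injective nA nB)
      (range (mapIncl U V))
  have he := e.finrank_eq
  rw [← he, LinearMap.finrank_range_of_inj (aux_mapIncl_injective U V),
    Module.finrank_tensorProduct]

lemma tensorSpan_inf {nA nB : ℕ} (U0 U1 : Submodule F2 (Fin nA → F2))
    (V0 V1 : Submodule F2 (Fin nB → F2)) :
    tensorSpan U0 V0 ⊓ tensorSpan U1 V1 = tensorSpan (U0 ⊓ U1) (V0 ⊓ V1) := by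
  rw [tensorSpan_eq, tensorSpan_eq, tensorSpan_eq,
    ← Submodule.map_inf _ (outerMap_injective nA nB), aux_range_mapIncl_inf]

/-! ### Dual code dimensions -/

lemma mem_dualCode {n : ℕ} {C : Submodule F2 (Fin n → F2)} {x : Fin n → F2} :
    x ∈ dualCode C ↔ ∀ c ∈ C, x ⬝ᵥ c = 0 := Iff.rfl

lemma toDual_eq_dotProduct {n : ℕ} (x y : Fin n → F2) :
    (Pi.basisFun F2 (Fin n)).toDual x y = x ⬝ᵥ y := by
  set b := Pi.basisFun F2 (Fin n)
  conv_lhs => rw [show y = ∑ j, Pi.single j (y j) from (Finset.univ_sum_single y).symm]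
  rw [map_sum]
  rw [show (x ⬝ᵥ y) = ∑ j, x j * y j from rfl]
  refine Finset.sum_congr rfl fun j _ => ?_
  have : (Pi.single j (y j) : Fin n → F2) = y j • b j := by
    rw [Pi.basisFun_apply, ← Pi.single_smul, smul_eq_mul, mul_one]
  rw [this, _root_.map_smul, Module.Basis.toDual_apply_left, Pi.basisFun_repr, smul_eq_mul, mul_comm]

lemma dualCode_eq_comap {n : ℕ} (C : Submodule F2 (Fin n → F2)) :
    dualCode C = Submodule.comap (Pi.basisFun F2 (Fin n)).toDualEquiv.toLinearMap
      C.dualAnnihilator := by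
  ext x
  rw [mem_dualCode, Submodule.mem_comap, Submodule.mem_dualAnnihilator]
  constructor
  · intro h w hw
    rw [LinearEquiv.coe_coe, Module.Basis.toDualEquiv_apply, toDual_eq_dotProduct]
    exact h w hw
  · intro h c hc
    rw [← toDual_eq_dotProduct, ← Module.Basis.toDualEquiv_apply, ← LinearEquiv.coe_coe]
    exact h c hc

lemma finrank_dualCode {n : ℕ} (C : Submodule F2 (Fin n → F2)) :
    Module.finrank F2 (dualCode C) + Module.finrank F2 C = n := by
  rw [dualCode_eq_comap, Submodule.comap_equiv_eq_map_symm]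
  rw [LinearEquiv.finrank_map_eq]
  rw [← LinearEquiv.finrank_eq (Subspace.quotEquivAnnihilator C)]
  rw [Submodule.finrank_quotient_add_finrank]
  simp [Module.finrank_pi]

lemma dualCode_sup {n : ℕ} (C0 C1 : Submodule F2 (Fin n → F2)) :
    dualCode (C0 ⊔ C1) = dualCode C0 ⊓ dualCode C1 := by
  ext x
  rw [Submodule.mem_inf, mem_dualCode, mem_dualCode, mem_dualCode]
  constructor
  · intro h
    exact ⟨fun c hc => h c (Submodule.mem_sup_left hc),
      fun c hc => h c (Submodule.mem_sup_right hc)⟩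
  · rintro ⟨h0, h1⟩ c hc
    obtain ⟨p, hp, q, hq, rfl⟩ := Submodule.mem_sup.mp hc
    rw [dotProduct_add, h0 p hp, h1 q hq, add_zero]

/-! ### Main theorem -/

theorem stmt4 {nA nB : ℕ} (C0 C1 : Submodule F2 (Fin nA → F2))
    (C0' C1' : Submodule F2 (Fin nB → F2)) :
    Module.finrank F2
        ((tensorSpan (dualCode C0) C0' ⊔ tensorSpan (dualCode C1) C1' :
            Submodule F2 (Matrix (Fin nA) (Fin nB) F2)))
      + Module.finrank F2
          ((tensorSpan C0 (dualCode C1') ⊔ tensorSpan C1 (dualCode C0') :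
            Submodule F2 (Matrix (Fin nA) (Fin nB) F2)))
      + (Module.finrank F2 ((C0 ⊓ C1 : Submodule F2 (Fin nA → F2)))
            * Module.finrank F2 ((C0' ⊓ C1' : Submodule F2 (Fin nB → F2)))
          + Module.finrank F2 ((dualCode C0 ⊓ dualCode C1 : Submodule F2 (Fin nA → F2)))
            * Module.finrank F2 ((dualCode C0' ⊓ dualCode C1' : Submodule F2 (Fin nB → F2))))
      = nA * nB := by
  classical
  -- dual code dimensions
  have hd0 := finrank_dualCode C0
  have hd1 := finrank_dualCode C1
  have he0 := finrank_dualCode C0'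
  have he1 := finrank_dualCode C1'
  -- sup/inf dimension relations in the base spaces
  have h6 := Submodule.finrank_sup_add_finrank_inf_eq C0 C1
  have h8 := Submodule.finrank_sup_add_finrank_inf_eq C0' C1'
  have h5 := finrank_dualCode (C0 ⊔ C1)
  rw [dualCode_sup] at h5
  have h7 := finrank_dualCode (C0' ⊔ C1')
  rw [dualCode_sup] at h7
  -- X-check space dimension
  have h9 := Submodule.finrank_sup_add_finrank_inf_eq
    (tensorSpan (dualCode C0) C0') (tensorSpan (dualCode C1) C1')
  rw [tensorSpan_inf, finrank_tensorSpan, finrank_tensorSpan, finrank_tensorSpan] at h9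
  -- Z-check space dimension
  have h10 := Submodule.finrank_sup_add_finrank_inf_eq
    (tensorSpan C0 (dualCode C1')) (tensorSpan C1 (dualCode C0'))
  rw [tensorSpan_inf, finrank_tensorSpan, finrank_tensorSpan, finrank_tensorSpan,
    show dualCode C1' ⊓ dualCode C0' = dualCode C0' ⊓ dualCode C1' from inf_comm ..] at h10
  -- pure arithmetic from here on
  set k0 := Module.finrank F2 C0
  set k1 := Module.finrank F2 C1
  set k0' := Module.finrank F2 C0'
  set k1' := Module.finrank F2 C1'
  set d0 := Module.finrank F2 (dualCode C0)
  set d1 := Module.finrank F2 (dualCode C1)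
  set e0 := Module.finrank F2 (dualCode C0')
  set e1 := Module.finrank F2 (dualCode C1')
  set m := Module.finrank F2 (C0 ⊓ C1 : Submodule F2 (Fin nA → F2))
  set m' := Module.finrank F2 (C0' ⊓ C1' : Submodule F2 (Fin nB → F2))
  set a := Module.finrank F2 (dualCode C0 ⊓ dualCode C1 : Submodule F2 (Fin nA → F2))
  set b := Module.finrank F2 (dualCode C0' ⊓ dualCode C1' : Submodule F2 (Fin nB → F2))
  set s := Module.finrank F2 (C0 ⊔ C1 : Submodule F2 (Fin nA → F2))
  set s' := Module.finrank F2 (C0' ⊔ C1' : Submodule F2 (Fin nB → F2))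
  set X := Module.finrank F2
    ((tensorSpan (dualCode C0) C0' ⊔ tensorSpan (dualCode C1) C1' :
      Submodule F2 (Matrix (Fin nA) (Fin nB) F2)))
  set Z := Module.finrank F2
    ((tensorSpan C0 (dualCode C1') ⊔ tensorSpan C1 (dualCode C0') :
      Submodule F2 (Matrix (Fin nA) (Fin nB) F2)))
  zify at hd0 hd1 he0 he1 h5 h6 h7 h8 h9 h10 ⊢
  linear_combination (k0' : ℤ) * hd0 + (k1' : ℤ) * hd1 + (k1 : ℤ) * he0 + (k0 : ℤ) * he1
    + ((b : ℤ) - (m' : ℤ)) * h5 - ((b : ℤ) - (m' : ℤ)) * h6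
    + ((nA : ℤ) - (k0 : ℤ) - (k1 : ℤ)) * h7 - ((nA : ℤ) - (k0 : ℤ) - (k1 : ℤ)) * h8
    + h9 + h10
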